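/- In Wythoff's game, a position (a,b) with a ≤ b is a P position if and only if there exists a nonnegative integer n with a = ⌊nφ⌋ and b = ⌊nφ²⌋, where φ = (1+√5)/2 is the golden ratio. -/

import Mathlib

namespace Wythoff

/-- A move in Wythoff's game: decrease one coordinate, or both by the same positive amount. -/
def Move (p q : ℕ × ℕ) : Prop :=
  (q.1 < p.1 ∧ q.2 = p.2) ∨ (q.1 = p.1 ∧ q.2 < p.2) ∨
  (∃ k, 0 < k ∧ k ≤ p.1 ∧ k ≤ p.2 ∧ q = (p.1 - k, p.2 - k))

theorem Move.sum_lt {p q : ℕ × ℕ} (h : Move p q) : q.1 + q.2 < p.1 + p.2 := by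
  rcases h with ⟨h1, h2⟩ | ⟨h1, h2⟩ | ⟨k, hk, h1, h2, hq⟩ <;> subst_vars <;> simp_all <;> omega

/-- P positions: every option is an N position (i.e. no option is itself P). -/
def PPos (p : ℕ × ℕ) : Prop := ∀ q, Move p q → ¬ PPos q
termination_by p.1 + p.2
decreasing_by exact Move.sum_lt (by assumption)

/-- N positions: some option is a P position. -/
def NPos (p : ℕ × ℕ) : Prop := ∃ q, Move p q ∧ PPos q

end Wythoff


noncomputable def phi : ℝ := (1 + Real.sqrt 5) / 2


open goldenRatio Real

theorem phi_eq : phi = goldenRatio := rfl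

theorem gold_conj : Real.HolderConjugate goldenRatio (goldenRatio^2) := by
  have h := goldenRatio_sq
  have h1 := one_lt_goldenRatio
  generalize goldenRatio = g at h h1 ⊢
  constructor
  · have : g ≠ 0 := (by linarith : (0:ℝ) < g).ne'
    field_simp
    nlinarith
  · linarith
  · nlinarith

noncomputable def wA (n : ℕ) : ℕ := (⌊(n:ℝ) * goldenRatio⌋).toNat

noncomputable def wB (n : ℕ) : ℕ := wA n + n

theorem wA_cast (n : ℕ) : (wA n : ℤ) = ⌊(n:ℝ) * goldenRatio⌋ := by
  rw [wA, Int.toNat_of_nonneg]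
  positivity

theorem wB_cast (n : ℕ) : (wB n : ℤ) = ⌊(n:ℝ) * goldenRatio^2⌋ := by
  have : (n:ℝ) * goldenRatio^2 = (n:ℝ) * goldenRatio + (n:ℤ) := by
    rw [goldenRatio_sq]; push_cast; ring
  rw [this, Int.floor_add_intCast, wB]
  push_cast [wA_cast]
  ring

theorem wA_strictMono : StrictMono wA := by
  have key : ∀ n : ℕ, wA n < wA (n+1) := by
    intro n
    have h1 : ((n:ℝ)) * goldenRatio + 1 ≤ ((n:ℕ)+1 : ℝ) * goldenRatio := by
      have := one_lt_goldenRatio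
      nlinarith
    have : (wA n : ℤ) + 1 ≤ (wA (n+1) : ℤ) := by
      rw [wA_cast, wA_cast]
      have := Int.floor_le_floor h1
      rw [show ((n:ℝ)) * goldenRatio + 1 = ((n:ℝ)) * goldenRatio + (1:ℤ) by push_cast; ring,
        Int.floor_add_intCast] at this
      push_cast at this ⊢
      omega
    omega
  exact strictMono_nat_of_lt_succ key

theorem wA_le (n : ℕ) : n ≤ wA n := by
  have : (n : ℤ) ≤ (wA n : ℤ) := by
    rw [wA_cast]
    rw [Int.le_floor]
    have := one_lt_goldenRatio
    push_cast
    nlinarith [Nat.cast_nonneg (α := ℝ) n]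
  omega

theorem wA_zero : wA 0 = 0 := by
  have := wA_cast 0; simp at this; omega

-- Beatty partition facts
theorem wA_ne_wB {m n : ℕ} (hm : 0 < m) (hn : 0 < n) : wA m ≠ wB n := by
  have hpart := Irrational.beattySeq_symmDiff_beattySeq_pos gold_conj goldenRatio_irrational
  intro h
  have hj : (0:ℤ) < (wA m : ℤ) := by
    have := wA_le m; omega
  have hmem : (wA m : ℤ) ∈ symmDiff {x | ∃ k > 0, beattySeq goldenRatio k = x}
      {x | ∃ k > 0, beattySeq (goldenRatio^2) k = x} := by
    rw [hpart]; exact hj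
  rw [Set.mem_symmDiff] at hmem
  have h1 : (wA m : ℤ) ∈ {x | ∃ k > 0, beattySeq goldenRatio k = x} := by
    exact ⟨m, by exact_mod_cast hm, (wA_cast m).symm⟩
  have h2 : (wA m : ℤ) ∈ {x | ∃ k > 0, beattySeq (goldenRatio^2) k = x} := by
    refine ⟨n, by exact_mod_cast hn, ?_⟩
    rw [beattySeq]
    push_cast
    rw [← wB_cast]
    exact_mod_cast h.symm
  rcases hmem with ⟨_, h⟩ | ⟨_, h⟩ <;> exact h ‹_›

theorem wA_or_wB {j : ℕ} (hj : 0 < j) : (∃ m, wA m = j) ∨ (∃ n, wB n = j) := by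
  have hpart := Irrational.beattySeq_symmDiff_beattySeq_pos gold_conj goldenRatio_irrational
  have hjZ : (j:ℤ) ∈ {n : ℤ | 0 < n} := show (0:ℤ) < (j:ℤ) by exact_mod_cast hj
  rw [← hpart, Set.mem_symmDiff] at hjZ
  rcases hjZ with ⟨⟨k, hk, hkj⟩, _⟩ | ⟨⟨k, hk, hkj⟩, _⟩
  · left
    refine ⟨k.toNat, ?_⟩
    have hk' : ((k.toNat : ℕ) : ℝ) = (k:ℝ) := by exact_mod_cast Int.toNat_of_nonneg hk.le
    have : (wA k.toNat : ℤ) = (j:ℤ) := by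
      rw [wA_cast, ← hkj, beattySeq, hk']
    exact_mod_cast this
  · right
    refine ⟨k.toNat, ?_⟩
    have hk' : ((k.toNat : ℕ) : ℝ) = (k:ℝ) := by exact_mod_cast Int.toNat_of_nonneg hk.le
    have : (wB k.toNat : ℤ) = (j:ℤ) := by
      rw [wB_cast, ← hkj, beattySeq, hk']
    exact_mod_cast this

theorem wB_strictMono : StrictMono wB := fun m n h =>
  Nat.add_lt_add (wA_strictMono h) h

namespace Wythoff

theorem ppos_iff (p : ℕ × ℕ) : PPos p ↔ ∀ q, Move p q → ¬ PPos q := by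
  rw [PPos]

theorem move_swap {p q : ℕ × ℕ} (h : Move p q) : Move (p.2, p.1) (q.2, q.1) := by
  rcases h with ⟨h1, h2⟩ | ⟨h1, h2⟩ | ⟨k, hk, h1, h2, hq⟩
  · exact Or.inr (Or.inl ⟨h2, h1⟩)
  · exact Or.inl ⟨h2, h1⟩
  · exact Or.inr (Or.inr ⟨k, hk, h2, h1, by rw [hq]⟩)

theorem ppos_swap : ∀ s, ∀ p : ℕ × ℕ, p.1 + p.2 = s → (PPos p ↔ PPos (p.2, p.1)) := by
  intro s
  induction s using Nat.strong_induction_on with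
  | _ s IH =>
    intro p hp
    have dir : ∀ q : ℕ × ℕ, q.1 + q.2 = s → PPos q → PPos (q.2, q.1) := by
      intro q hq hP
      rw [PPos]
      intro r hr hPr
      have hr' : Move q (r.2, r.1) := move_swap hr
      have hsum : r.1 + r.2 < s := by have := Move.sum_lt hr; omega
      rw [PPos] at hP
      exact hP (r.2, r.1) hr' ((IH _ hsum r rfl).mp hPr)
    exact ⟨dir p hp, fun h => dir (p.2, p.1) (by omega) h⟩

theorem key : ∀ s, ∀ a b : ℕ, a + b = s → a ≤ b →
    (PPos (a, b) ↔ ∃ n, a = wA n ∧ b = wB n) := by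
  intro s
  induction s using Nat.strong_induction_on with
  | _ s IH =>
  intro a b hs hab
  constructor
  · -- PPos → member (contrapositive: not member → there is a move to a P position)
    intro hP
    by_contra hno
    push_neg at hno
    rw [PPos] at hP
    set d := b - a with hd
    have hbd : b = a + d := by omega
    by_cases hcmp : wA d < a
    · -- diagonal move to (wA d, wB d)
      have hBd : wB d < b := by rw [wB] at *; omega
      have target : PPos (wA d, wB d) := by
        refine (IH (wA d + wB d) (by omega) (wA d) (wB d) rfl (by rw [wB]; omega)).mpr ⟨d, rfl, rfl⟩
      refine hP (wA d, wB d) (Or.inr (Or.inr ⟨a - wA d, by omega, by omega, by omega, ?_⟩)) target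
      have h1 : a - (a - wA d) = wA d := by omega
      have h2 : b - (a - wA d) = wB d := by rw [wB] at *; omega
      simp only [h1, h2]
    · have haA : a < wA d := by
        rcases lt_or_eq_of_le (not_lt.mp hcmp) with h | h
        · exact h
        · exact (hno d h (by rw [wB, ← h]; omega)).elim
      have hcases : (∃ m, wA m = a) ∨ (∃ m, 0 < m ∧ wB m = a) := by
        rcases Nat.eq_zero_or_pos a with ha0 | hapos
        · exact Or.inl ⟨0, by rw [wA_zero, ha0]⟩
        · rcases wA_or_wB hapos with ⟨m, hm⟩ | ⟨m, hm⟩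
          · exact Or.inl ⟨m, hm⟩
          · refine Or.inr ⟨m, ?_, hm⟩
            rcases Nat.eq_zero_or_pos m with h0 | h0
            · rw [h0, wB, wA_zero] at hm; omega
            · exact h0
      rcases hcases with ⟨m, hm⟩ | ⟨m, hm0, hm⟩
      · -- a = wA m, move b down to wB m
        have hmd : m < d := by
          by_contra hc
          exact absurd (wA_strictMono.monotone (not_lt.mp hc)) (by omega)
        have hBm : wB m < b := by rw [wB] at *; omega
        have target : PPos (a, wB m) := by
          refine (IH (a + wB m) (by omega) a (wB m) rfl (by rw [wB] at *; omega)).mpr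
            ⟨m, hm.symm, rfl⟩
        exact hP (a, wB m) (Or.inr (Or.inl ⟨rfl, hBm⟩)) target
      · -- a = wB m, move b down to wA m
        have hAm : wA m < a := by rw [← hm, wB]; omega
        have target0 : PPos (wA m, wB m) := by
          refine (IH (wA m + wB m) (by omega) (wA m) (wB m) rfl (by rw [wB]; omega)).mpr
            ⟨m, rfl, rfl⟩
        have target : PPos (a, wA m) := by
          have := (ppos_swap (wA m + wB m) (wA m, wB m) rfl).mp target0
          rw [← hm]
          exact this
        exact hP (a, wA m) (Or.inr (Or.inl ⟨rfl, by omega⟩)) target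
  · -- member → PPos
    rintro ⟨n, ha, hb⟩
    rw [PPos]
    rintro q hq hPq
    have hsum := Move.sum_lt hq
    -- sorted version of q is in the Beatty family
    have hsorted : ∃ m, min q.1 q.2 = wA m ∧ max q.1 q.2 = wB m := by
      have hq' : PPos (min q.1 q.2, max q.1 q.2) := by
        rcases le_total q.1 q.2 with h | h
        · rw [min_eq_left h, max_eq_right h]; exact hPq
        · rw [min_eq_right h, max_eq_left h]
          exact (ppos_swap (q.1 + q.2) q rfl).mp hPq
      exact (IH (min q.1 q.2 + max q.1 q.2)
        (by rcases le_total q.1 q.2 with h | h <;> simp [min_eq_left, min_eq_right,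
          max_eq_right, max_eq_left, h] <;> omega) _ _ rfl (min_le_max)).mp hq'
    obtain ⟨m, hmin, hmax⟩ := hsorted
    have hBm : wB m = wA m + m := rfl
    have hBn : wB n = wA n + n := rfl
    rcases hq with ⟨h1, h2⟩ | ⟨h1, h2⟩ | ⟨k, hk, hk1, hk2, hqe⟩
    · -- q = (q.1, b), q.1 < a
      have hx : min q.1 q.2 = q.1 := min_eq_left (by omega)
      have hy : max q.1 q.2 = q.2 := max_eq_right (by omega)
      have hmn : m = n := wB_strictMono.injective (by omega)
      subst hmn
      omega
    · -- q = (a, q.2), q.2 < b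
      rcases le_or_gt q.1 q.2 with hle | hle
      · have hx : min q.1 q.2 = q.1 := min_eq_left hle
        have hy : max q.1 q.2 = q.2 := max_eq_right hle
        have hmn : m = n := wA_strictMono.injective (by omega)
        subst hmn
        omega
      · have hx : min q.1 q.2 = q.2 := min_eq_right hle.le
        have hy : max q.1 q.2 = q.1 := max_eq_left hle.le
        have hz : wA 0 = 0 := wA_zero
        have hw : n ≤ wA n := wA_le n
        rcases Nat.eq_zero_or_pos n with hn0 | hn0
        · subst hn0; omega
        · have hm0 : 0 < m := by
            rcases Nat.eq_zero_or_pos m with h0 | h0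
            · subst h0; omega
            · exact h0
          exact wA_ne_wB hn0 hm0 (by omega)
    · -- diagonal
      have hq1 : q.1 = a - k := by rw [hqe]
      have hq2 : q.2 = b - k := by rw [hqe]
      have hx : min q.1 q.2 = q.1 := min_eq_left (by omega)
      have hy : max q.1 q.2 = q.2 := max_eq_right (by omega)
      have hmn : m = n := by omega
      subst hmn
      omega

end Wythoff

theorem wythoff_P_iff_wythoff_pair (a b : ℕ) (hab : a ≤ b) :
    Wythoff.PPos (a, b) ↔
      ∃ n : ℕ, (a : ℤ) = ⌊(n : ℝ) * phi⌋ ∧ (b : ℤ) = ⌊(n : ℝ) * phi ^ 2⌋ := by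
  rw [Wythoff.key (a + b) a b rfl hab]
  constructor
  · rintro ⟨n, ha, hb⟩
    exact ⟨n, by rw [phi_eq, ← wA_cast, ha], by rw [phi_eq, ← wB_cast, hb]⟩
  · rintro ⟨n, ha, hb⟩
    refine ⟨n, ?_, ?_⟩
    · have : (a : ℤ) = (wA n : ℤ) := by rw [wA_cast, ← phi_eq]; exact ha
      exact_mod_cast this
    · have : (b : ℤ) = (wB n : ℤ) := by rw [wB_cast, ← phi_eq]; exact hb
      exact_mod_cast this
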